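/- The S-radical of I = (f₁,…,f_s) with inequality constraints g₁,…,g_r equals the contraction to ℝ[x] of the real radical of the extended ideal I_S = (f₁,…,f_s, g₁ − s₁², …, g_r − s_r²) in ℝ[x, s₁,…,s_r], i.e. √[S]{I} = √[ℝ]{I_S} ∩ ℝ[x]. -/

import Mathlib

open MvPolynomial

/-- The real radical of an ideal, here in `ℝ[x₁,…,xₙ,s₁,…,s_r]`. -/
def realRadical {n r : ℕ} (I : Ideal (MvPolynomial (Fin n ⊕ Fin r) ℝ)) :
    Set (MvPolynomial (Fin n ⊕ Fin r) ℝ) :=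
  {p | ∃ (m : ℕ) (s : MvPolynomial (Fin n ⊕ Fin r) ℝ), IsSumSq s ∧ p ^ (2 * m) + s ∈ I}

namespace SRadAux

variable {n r : ℕ}

/-- Per-variable building block: the image of `sⱼᵏ` in the reduction mod `sⱼ² - gⱼ`,
extracting the part whose parity matches `a`. -/
noncomputable def vv (gj : MvPolynomial (Fin n) ℝ) (a : Bool) (k : ℕ) :
    MvPolynomial (Fin n) ℝ :=
  if k % 2 = (if a then 1 else 0) then gj ^ (k / 2) else 0

noncomputable def VV (g : Fin r → MvPolynomial (Fin n) ℝ) (α : Fin r → Bool)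
    (β : Fin r →₀ ℕ) : MvPolynomial (Fin n) ℝ :=
  ∏ j : Fin r, vv (g j) (α j) (β j)

noncomputable def Gpoly (g : Fin r → MvPolynomial (Fin n) ℝ) (α : Fin r → Bool) :
    MvPolynomial (Fin n) ℝ :=
  ∏ j : Fin r, (if α j then g j else 1)

/-- The `α`-coordinate of the normal form of a polynomial in `(ℝ[x])[s]` modulo
the relations `sⱼ² = gⱼ`. -/
noncomputable def hA (g : Fin r → MvPolynomial (Fin n) ℝ) (α : Fin r → Bool)
    (P : MvPolynomial (Fin r) (MvPolynomial (Fin n) ℝ)) : MvPolynomial (Fin n) ℝ :=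
  ∑ β ∈ P.support, coeff β P * VV g α β

variable (g : Fin r → MvPolynomial (Fin n) ℝ) (α : Fin r → Bool)

theorem hA_eq_sum {P : MvPolynomial (Fin r) (MvPolynomial (Fin n) ℝ)}
    {S : Finset (Fin r →₀ ℕ)} (h : P.support ⊆ S) :
    hA g α P = ∑ β ∈ S, coeff β P * VV g α β := by
  rw [hA, Finset.sum_subset h]
  intro β _ hβ
  rw [notMem_support_iff.mp hβ, zero_mul]

theorem hA_add (P Q : MvPolynomial (Fin r) (MvPolynomial (Fin n) ℝ)) :
    hA g α (P + Q) = hA g α P + hA g α Q := by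
  rw [hA_eq_sum g α (S := P.support ∪ Q.support) (support_add),
    hA_eq_sum g α (S := P.support ∪ Q.support) (Finset.subset_union_left),
    hA_eq_sum g α (S := P.support ∪ Q.support) (Finset.subset_union_right),
    ← Finset.sum_add_distrib]
  refine Finset.sum_congr rfl fun β _ => ?_
  rw [coeff_add, add_mul]

theorem hA_monomial (β : Fin r →₀ ℕ) (c : MvPolynomial (Fin n) ℝ) :
    hA g α (monomial β c) = c * VV g α β := by
  by_cases hc : c = 0
  · simp [hA, hc]
  · rw [hA_eq_sum g α (S := {β}) (support_monomial_subset), Finset.sum_singleton,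
      coeff_monomial, if_pos rfl]

/-- `hA` bundled as an additive monoid hom. -/
noncomputable def hAhom : MvPolynomial (Fin r) (MvPolynomial (Fin n) ℝ) →+
    MvPolynomial (Fin n) ℝ where
  toFun := hA g α
  map_zero' := by simp [hA]
  map_add' := hA_add g α

theorem hA_sub (P Q : MvPolynomial (Fin r) (MvPolynomial (Fin n) ℝ)) :
    hA g α (P - Q) = hA g α P - hA g α Q :=
  map_sub (hAhom g α) P Q

theorem vv_key (gj : MvPolynomial (Fin n) ℝ) (k l : ℕ) :
    vv gj false (k + l) =
      vv gj false k * vv gj false l + vv gj true k * vv gj true l * gj := by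
  rcases Nat.mod_two_eq_zero_or_one k with hk | hk <;>
    rcases Nat.mod_two_eq_zero_or_one l with hl | hl <;>
      simp only [vv, hk, hl, if_true, if_false] <;> norm_num <;>
        [skip; (intro h; omega); (intro h; omega); skip]
  · rw [if_pos (by omega), ← pow_add]
    congr 1
    omega
  · rw [if_pos (by omega), ← pow_add, ← pow_succ]
    congr 1
    omega

/-- The key bilinear identity: the constant coordinate of the normal form of a product
is the "inner product" of the coordinates, weighted by the `g^α`. -/
theorem key_bilinear (P Q : MvPolynomial (Fin r) (MvPolynomial (Fin n) ℝ)) :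
    hA g (fun _ => false) (P * Q) =
      ∑ α : Fin r → Bool, hA g α P * hA g α Q * Gpoly g α := by
  induction P using MvPolynomial.induction_on' generalizing Q with
  | add p₁ p₂ ih₁ ih₂ =>
    rw [add_mul, hA_add, ih₁, ih₂, ← Finset.sum_add_distrib]
    refine Finset.sum_congr rfl fun α _ => ?_
    rw [hA_add]
    ring
  | monomial β c =>
    induction Q using MvPolynomial.induction_on' with
    | add q₁ q₂ ih₁ ih₂ =>
      rw [mul_add, hA_add, ih₁, ih₂, ← Finset.sum_add_distrib]
      refine Finset.sum_congr rfl fun α _ => ?_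
      rw [hA_add]
      ring
    | monomial β' c' =>
      rw [monomial_mul, hA_monomial]
      have : ∀ α, hA g α (monomial β c) * hA g α (monomial β' c') * Gpoly g α
          = (c * c') * (VV g α β * VV g α β' * Gpoly g α) := by
        intro α
        rw [hA_monomial, hA_monomial]
        ring
      rw [Finset.sum_congr rfl fun α _ => this α, ← Finset.mul_sum]
      congr 1
      have : ∀ α : Fin r → Bool, VV g α β * VV g α β' * Gpoly g α =
          ∏ j : Fin r, (vv (g j) (α j) (β j) * vv (g j) (α j) (β' j) *
            (if α j then g j else 1)) := by
        intro α
        rw [VV, VV, Gpoly, ← Finset.prod_mul_distrib, ← Finset.prod_mul_distrib]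
      rw [Finset.sum_congr rfl fun α _ => this α]
      rw [VV]
      have := Finset.prod_univ_sum (fun _ : Fin r => (Finset.univ : Finset Bool))
        (fun j a => vv (g j) a (β j) * vv (g j) a (β' j) * (if a then g j else 1))
      rw [Fintype.piFinset_univ] at this
      rw [← this]
      refine Finset.prod_congr rfl fun j _ => ?_
      rw [Finsupp.add_apply, vv_key]
      simp [Finset.sum_ite_eq, mul_one]
      ring

theorem VV_eq_zero (hα : α ≠ fun _ => false) (β : Fin r →₀ ℕ)
    (hβ : ∀ j, β j % 2 = 0) : VV g α β = 0 := by
  obtain ⟨j, hj⟩ : ∃ j, α j = true := by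
    by_contra h
    push_neg at h
    exact hα (funext fun j => by simpa using h j)
  refine Finset.prod_eq_zero (Finset.mem_univ j) ?_
  rw [vv, hj, if_neg (by rw [hβ j]; simp)]

theorem Gpoly_false : Gpoly g (fun _ => false) = 1 := by simp [Gpoly]

theorem hA_mul_C (P : MvPolynomial (Fin r) (MvPolynomial (Fin n) ℝ))
    (c : MvPolynomial (Fin n) ℝ) :
    hA g (fun _ => false) (P * C c) = hA g (fun _ => false) P * c := by
  rw [show (C c : MvPolynomial (Fin r) (MvPolynomial (Fin n) ℝ)) = monomial 0 c from rfl,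
    key_bilinear g]
  rw [Finset.sum_eq_single (fun _ => false)]
  · rw [hA_monomial, Gpoly_false, VV]
    simp [vv]
  · intro α _ hα
    rw [hA_monomial, VV_eq_zero g α hα 0 (by simp)]
    ring
  · simp

theorem hA_mul_X_sq (P : MvPolynomial (Fin r) (MvPolynomial (Fin n) ℝ)) (j : Fin r) :
    hA g (fun _ => false) (P * X j ^ 2) = hA g (fun _ => false) P * g j := by
  rw [X_pow_eq_monomial, key_bilinear g, Finset.sum_eq_single (fun _ => false)]
  · rw [hA_monomial, Gpoly_false, VV, mul_one, one_mul]
    congr 1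
    have : ∀ j' : Fin r, vv (g j') false ((Finsupp.single j 2) j') =
        if j = j' then g j' else 1 := by
      intro j'
      rw [Finsupp.single_apply]
      by_cases h : j = j' <;> simp [h, vv]
    rw [Finset.prod_congr rfl fun j' _ => this j', Finset.prod_ite_eq]
    simp
  · intro α _ hα
    rw [hA_monomial, VV_eq_zero g α hα _ (fun j' => ?_)]
    · ring
    · rw [Finsupp.single_apply]
      by_cases h : j = j' <;> simp [h]
  · simp

/-- the algebra equivalence `ℝ[x ⊕ s] ≃ (ℝ[x])[s]`. -/
noncomputable def ee : MvPolynomial (Fin n ⊕ Fin r) ℝ ≃ₐ[ℝ]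
    MvPolynomial (Fin r) (MvPolynomial (Fin n) ℝ) :=
  (renameEquiv ℝ (Equiv.sumComm (Fin n) (Fin r))).trans (sumAlgEquiv ℝ (Fin r) (Fin n))

theorem ee_X_inl (i : Fin n) :
    ee (X (Sum.inl i) : MvPolynomial (Fin n ⊕ Fin r) ℝ) = C (X i) := by
  simp [ee, sumAlgEquiv_X_inl, sumAlgEquiv_X_inr, sumAlgEquiv_C_inl, sumToIter_Xr]

theorem ee_rename (q : MvPolynomial (Fin n) ℝ) :
    ee (rename Sum.inl q : MvPolynomial (Fin n ⊕ Fin r) ℝ) = C q := by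
  induction q using MvPolynomial.induction_on with
  | C a =>
      rw [rename_C]
      simp [ee, sumAlgEquiv_X_inl, sumAlgEquiv_X_inr, sumAlgEquiv_C_inl, sumToIter_C]
  | add p q hp hq => rw [map_add, map_add, hp, hq, map_add]
  | mul_X p i hp => rw [map_mul, map_mul, hp, rename_X, ee_X_inl, map_mul]

/-- the contraction map `ℝ[x ⊕ s] → ℝ[x]`: constant coordinate of the normal form
modulo `sⱼ² = gⱼ`. -/
noncomputable def piihom : MvPolynomial (Fin n ⊕ Fin r) ℝ →+ MvPolynomial (Fin n) ℝ :=
  (hAhom g (fun _ => false)).comp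
    (((ee (n := n) (r := r)).toRingEquiv :
      MvPolynomial (Fin n ⊕ Fin r) ℝ →+* _) : _ →+* _).toAddMonoidHom

theorem piihom_apply (t : MvPolynomial (Fin n ⊕ Fin r) ℝ) :
    piihom g t = hA g (fun _ => false) (ee t) := rfl

theorem piihom_rename (q : MvPolynomial (Fin n) ℝ) :
    piihom g (rename Sum.inl q) = q := by
  rw [piihom_apply, ee_rename, show (C q : MvPolynomial (Fin r) (MvPolynomial (Fin n) ℝ))
    = monomial 0 q from rfl, hA_monomial, VV]
  simp [vv]

/-- The contraction of the extended ideal is contained in `span (range f)`. -/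
theorem piihom_mem_span {s : ℕ} (f : Fin s → MvPolynomial (Fin n) ℝ)
    {t : MvPolynomial (Fin n ⊕ Fin r) ℝ}
    (ht : t ∈ Ideal.span
        (Set.range (fun i => rename Sum.inl (f i)) ∪
          Set.range (fun j => rename Sum.inl (g j) -
            (X (Sum.inr j) : MvPolynomial (Fin n ⊕ Fin r) ℝ) ^ 2))) :
    piihom g t ∈ Ideal.span (Set.range f) := by
  obtain ⟨c, hsupp, hsum⟩ := Submodule.mem_span_set.mp ht
  rw [← hsum, Finsupp.sum, map_sum]
  refine Ideal.sum_mem _ fun u hu => ?_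
  rcases hsupp hu with ⟨i, rfl⟩ | ⟨j, rfl⟩
  · rw [smul_eq_mul, piihom_apply, map_mul, ee_rename, hA_mul_C]
    exact Ideal.mul_mem_left _ _ (Ideal.subset_span ⟨i, rfl⟩)
  · rw [smul_eq_mul, piihom_apply, map_mul]
    have h2 : ee ((rename Sum.inl (g j) : MvPolynomial (Fin n ⊕ Fin r) ℝ)
        - X (Sum.inr j) ^ 2) = C (g j) - X j ^ 2 := by
      rw [map_sub, ee_rename, map_pow]
      congr 2
      simp [ee, sumAlgEquiv_X_inl, sumAlgEquiv_X_inr, sumAlgEquiv_C_inl, sumToIter_Xl]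
    rw [h2, mul_sub, hA_sub, hA_mul_C, hA_mul_X_sq, sub_self]
    exact Ideal.zero_mem _

/-- A sum of squares in the extended ring contracts to an element of the form
`∑ α, (sum of squares) * g^α`. -/
theorem sos_decomp {t : MvPolynomial (Fin n ⊕ Fin r) ℝ} (hs : IsSumSq t) :
    ∃ sos : (Fin r → Bool) → MvPolynomial (Fin n) ℝ,
      (∀ α, IsSumSq (sos α)) ∧ piihom g t = ∑ α : Fin r → Bool, sos α * Gpoly g α := by
  induction hs with
  | zero => exact ⟨fun _ => 0, fun _ => IsSumSq.zero, by simp⟩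
  | sq_add a hS ih =>
    obtain ⟨sos, h1, h2⟩ := ih
    refine ⟨fun α => hA g α (ee a) * hA g α (ee a) + sos α,
      fun α => IsSumSq.sq_add _ (h1 α), ?_⟩
    rw [map_add, h2, piihom_apply, map_mul, key_bilinear, ← Finset.sum_add_distrib]
    exact Finset.sum_congr rfl fun α _ => by ring

theorem isSumSq_map {A B : Type*} [CommRing A] [CommRing B] (φ : A →+* B) {a : A}
    (ha : IsSumSq a) : IsSumSq (φ a) := by
  induction ha with
  | zero => rw [map_zero]; exact IsSumSq.zero
  | sq_add x _ ih => rw [map_add, map_mul]; exact IsSumSq.sq_add _ ih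

theorem isSumSq_mul_sq {A : Type*} [CommRing A] {a : A} (b : A) (ha : IsSumSq a) :
    IsSumSq (a * b ^ 2) := by
  induction ha with
  | zero => rw [zero_mul]; exact IsSumSq.zero
  | @sq_add x S _ ih =>
    rw [show (x * x + S) * b ^ 2 = (x * b) * (x * b) + S * b ^ 2 by ring]
    exact IsSumSq.sq_add _ ih

end SRadAux

open SRadAux in
/-- The `S`-radical of `I = (f₁,…,f_s)` with inequality constraints `g₁,…,g_r` equals the
contraction to `ℝ[x]` of the real radical of the extended ideal
`I_S = (f₁,…,f_s, g₁ − s₁², …, g_r − s_r²)` in `ℝ[x,s₁,…,s_r]`. -/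
theorem sRadical_eq_realRadical_extended {n s r : ℕ}
    (f : Fin s → MvPolynomial (Fin n) ℝ) (g : Fin r → MvPolynomial (Fin n) ℝ) :
    {p : MvPolynomial (Fin n) ℝ |
        ∃ (m : ℕ) (sos : (Fin r → Bool) → MvPolynomial (Fin n) ℝ),
          (∀ α, IsSumSq (sos α)) ∧
            p ^ (2 * m) +
              ∑ α : Fin r → Bool, sos α * ∏ j : Fin r, (if α j then g j else 1) ∈
              Ideal.span (Set.range f)} =
      {p : MvPolynomial (Fin n) ℝ |
        rename Sum.inl p ∈
          realRadical (Ideal.span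
            (Set.range (fun i => rename Sum.inl (f i)) ∪
              Set.range (fun j => rename Sum.inl (g j) - (X (Sum.inr j)) ^ 2)))} := by
  ext p
  simp only [Set.mem_setOf_eq, realRadical]
  set I := Ideal.span
      (Set.range (fun i => rename Sum.inl (f i)) ∪
        Set.range (fun j => (rename Sum.inl (g j) : MvPolynomial (Fin n ⊕ Fin r) ℝ)
          - (X (Sum.inr j)) ^ 2)) with hI
  constructor
  · rintro ⟨m, sos, hsos, hmem⟩
    refine ⟨m, ∑ α : Fin r → Bool,
      rename Sum.inl (sos α) * (∏ j : Fin r, if α j then X (Sum.inr j) else 1) ^ 2, ?_, ?_⟩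
    · refine Finset.sum_induction _ IsSumSq (fun a b ha hb => ha.add hb) IsSumSq.zero
        (fun α _ => ?_)
      exact isSumSq_mul_sq _ (isSumSq_map (rename Sum.inl).toRingHom (hsos α))
    · have hsub : Ideal.span (Set.range f) ≤
          Ideal.comap ((rename Sum.inl).toRingHom :
            MvPolynomial (Fin n) ℝ →+* MvPolynomial (Fin n ⊕ Fin r) ℝ) I := by
        rw [Ideal.span_le]
        rintro _ ⟨i, rfl⟩
        exact Ideal.subset_span (Or.inl ⟨i, rfl⟩)
      have hf0 : (Ideal.Quotient.mk I) (rename Sum.inl (p ^ (2 * m) +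
          ∑ α : Fin r → Bool, sos α * ∏ j : Fin r, (if α j then g j else 1))) = 0 :=
        Ideal.Quotient.eq_zero_iff_mem.mpr (hsub hmem)
      have hg : ∀ j : Fin r, (Ideal.Quotient.mk I (X (Sum.inr j))) ^ 2 =
          Ideal.Quotient.mk I (rename Sum.inl (g j)) := by
        intro j
        rw [← map_pow]
        exact (Ideal.Quotient.eq.mpr (by
          rw [show (X (Sum.inr j) : MvPolynomial (Fin n ⊕ Fin r) ℝ) ^ 2 -
            rename Sum.inl (g j) = -(rename Sum.inl (g j) - X (Sum.inr j) ^ 2) by ring]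
          exact I.neg_mem (Ideal.subset_span (Or.inr ⟨j, rfl⟩))))
      rw [← Ideal.Quotient.eq_zero_iff_mem, ← hf0]
      simp only [map_add, map_pow, map_mul, map_sum, map_prod, apply_ite
        (Ideal.Quotient.mk I), apply_ite (rename (Sum.inl : Fin n → Fin n ⊕ Fin r)),
        map_one]
      congr 1
      refine Finset.sum_congr rfl fun α _ => ?_
      congr 1
      rw [← Finset.prod_pow]
      refine Finset.prod_congr rfl fun j _ => ?_
      cases hj : α j <;> simp [hg j]
  · rintro ⟨m, t, ht, hmem⟩
    obtain ⟨sos, h1, h2⟩ := sos_decomp g ht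
    refine ⟨m, sos, h1, ?_⟩
    have := piihom_mem_span g f hmem
    rwa [map_add, ← map_pow, piihom_rename, h2] at this
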